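/- In the calculus with MP, IPC1, IPC2, and the Peirce scheme, the formula (A ⊃ Q) ⊃ ((B ⊃ Q) ⊃ (((A ⊃ B) ⊃ B) ⊃ Q)) is a theorem for all formulas A, B, Q. -/
import Mathlib


inductive Fm : Type
  | var : Nat → Fm
  | imp : Fm → Fm → Fm

inductive ThmP : Fm → Prop
  | ipc1 (A B : Fm) : ThmP (A.imp (B.imp A))
  | ipc2 (A B C : Fm) : ThmP ((A.imp (B.imp C)).imp ((A.imp B).imp (A.imp C)))
  | ipc0 (A B : Fm) : ThmP (((A.imp B).imp A).imp A)
  | mp {A B : Fm} : ThmP (A.imp B) → ThmP A → ThmP B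

inductive Der (Γ : List Fm) : Fm → Prop
  | ax {A : Fm} : ThmP A → Der Γ A
  | hyp {A : Fm} : A ∈ Γ → Der Γ A
  | mp {A B : Fm} : Der Γ (A.imp B) → Der Γ A → Der Γ B

theorem thmI (A : Fm) : ThmP (A.imp A) :=
  (ThmP.ipc2 A (A.imp A) A).mp (ThmP.ipc1 A (A.imp A)) |>.mp (ThmP.ipc1 A A)

theorem ded {Γ : List Fm} {A B : Fm} (h : Der (A :: Γ) B) : Der Γ (A.imp B) := by
  induction h with
  | ax t => exact Der.mp (Der.ax (ThmP.ipc1 _ A)) (Der.ax t)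
  | hyp m =>
    rcases List.mem_cons.mp m with rfl | m
    · exact Der.ax (thmI _)
    · exact Der.mp (Der.ax (ThmP.ipc1 _ A)) (Der.hyp m)
  | mp _ _ ih1 ih2 => exact Der.mp (Der.mp (Der.ax (ThmP.ipc2 A _ _)) ih1) ih2

theorem der_nil {X : Fm} (h : Der [] X) : ThmP X := by
  induction h with
  | ax t => exact t
  | hyp m => simp at m
  | mp _ _ ih1 ih2 => exact ih1.mp ih2

theorem stmt_9 (A B Q : Fm) :
    ThmP ((A.imp Q).imp ((B.imp Q).imp (((A.imp B).imp B).imp Q))) := by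
  apply der_nil
  apply ded; apply ded; apply ded
  -- context: [(A⊃B)⊃B, B⊃Q, A⊃Q], goal Q
  have hf : Der [(A.imp B).imp B, B.imp Q, A.imp Q] (A.imp Q) := Der.hyp (by simp)
  have hg : Der [(A.imp B).imp B, B.imp Q, A.imp Q] (B.imp Q) := Der.hyp (by simp)
  have hh : Der [(A.imp B).imp B, B.imp Q, A.imp Q] ((A.imp B).imp B) := Der.hyp (by simp)
  -- derive (Q⊃B)⊃Q
  have hqb : Der [(A.imp B).imp B, B.imp Q, A.imp Q] ((Q.imp B).imp Q) := by
    apply ded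
    have hk : Der (Q.imp B :: [(A.imp B).imp B, B.imp Q, A.imp Q]) (Q.imp B) :=
      Der.hyp (by simp)
    have hab : Der (Q.imp B :: [(A.imp B).imp B, B.imp Q, A.imp Q]) (A.imp B) := by
      apply ded
      have ha : Der (A :: Q.imp B :: [(A.imp B).imp B, B.imp Q, A.imp Q]) A :=
        Der.hyp (by simp)
      exact Der.mp (Der.hyp (by simp)) (Der.mp (Der.hyp (by simp : (A.imp Q) ∈ _)) ha)
    have hb := Der.mp (Der.hyp (by simp : ((A.imp B).imp B) ∈ _)) hab
    exact Der.mp (Der.hyp (by simp : (B.imp Q) ∈ _)) hb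
  exact Der.mp (Der.ax (ThmP.ipc0 Q B)) hqb
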